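/- In a Unit Rush Hour configuration with exactly one empty cell, a designated car initially occupying cell c is moved during some finite sequence of legal moves if and only if the associated static digraph contains a directed path of length at least 1 from the empty cell to c. -/

import Mathlib

/-- A cell of an `m × n` grid, indexed (row, column), column 0 leftmost. -/
abbrev Cell (m n : ℕ) := Fin m × Fin n

/-- `u` and `v` are horizontally adjacent. -/
def hAdj {m n : ℕ} (u v : Cell m n) : Prop :=
  u.1 = v.1 ∧ (u.2.val + 1 = v.2.val ∨ v.2.val + 1 = u.2.val)

/-- `u` and `v` are vertically adjacent. -/
def vAdj {m n : ℕ} (u v : Cell m n) : Prop :=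
  u.2 = v.2 ∧ (u.1.val + 1 = v.1.val ∨ v.1.val + 1 = u.1.val)

/-- A Unit Rush Hour configuration on an `m × n` grid with `k` (labeled) cars:
each car `i` has an orientation `ori i` (`true` = horizontal, `false` =
vertical) and a position `pos i`; distinct cars occupy distinct cells.
Cells outside the range of `pos` are empty. -/
structure RHConfig (m n k : ℕ) where
  ori : Fin k → Bool
  pos : Fin k → Cell m n
  inj : Function.Injective pos

/-- A legal move: one car `i` slides one cell into an adjacent empty cell —
horizontally if it is a horizontal car, vertically if it is a vertical car —
while all other cars (and all orientations) stay put. -/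
def RHMove {m n k : ℕ} (c c' : RHConfig m n k) : Prop :=
  c'.ori = c.ori ∧
  ∃ i : Fin k,
    (∀ j, j ≠ i → c'.pos j = c.pos j) ∧
    (∀ j, c.pos j ≠ c'.pos i) ∧
    ((c.ori i = true ∧ hAdj (c.pos i) (c'.pos i)) ∨
     (c.ori i = false ∧ vAdj (c.pos i) (c'.pos i)))

/-- The static digraph of a configuration with exactly one empty cell: for
every cell `v` other than the empty cell, an edge `u → v` whenever `v` is
horizontally adjacent to `u` and `v` contains a horizontal car, or `v` is
vertically adjacent to `u` and `v` contains a vertical car. -/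
def staticEdge {m n k : ℕ} (c : RHConfig m n k) (u v : Cell m n) : Prop :=
  ∃ j : Fin k, c.pos j = v ∧
    ((c.ori j = true ∧ hAdj u v) ∨ (c.ori j = false ∧ vAdj u v))

lemma hAdj_symm {m n : ℕ} {u v : Cell m n} (h : hAdj u v) : hAdj v u :=
  ⟨h.1.symm, h.2.symm⟩

lemma vAdj_symm {m n : ℕ} {u v : Cell m n} (h : vAdj u v) : vAdj v u :=
  ⟨h.1.symm, h.2.symm⟩

lemma hAdj_ne {m n : ℕ} {u v : Cell m n} (h : hAdj u v) : u ≠ v := by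
  rintro rfl
  rcases h.2 with h2 | h2 <;> omega

lemma vAdj_ne {m n : ℕ} {u v : Cell m n} (h : vAdj u v) : u ≠ v := by
  rintro rfl
  rcases h.2 with h2 | h2 <;> omega

/-- With `k + 1 = m * n` cars, the empty cell is unique. -/
lemma unique_empty {m n k : ℕ} (c : RHConfig m n k) (hk : k + 1 = m * n)
    (a b : Cell m n) (ha : ∀ j, c.pos j ≠ a) (hb : ∀ j, c.pos j ≠ b) : a = b := by
  classical
  have hcard : (Finset.univ.image c.pos)ᶜ.card = 1 := by
    rw [Finset.card_compl, Finset.card_image_of_injective _ c.inj, Finset.card_univ]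
    have h1 : Fintype.card (Cell m n) = m * n := by simp
    have h2 : Fintype.card (Fin k) = k := by simp
    omega
  obtain ⟨x, hx⟩ := Finset.card_eq_one.mp hcard
  have ha' : a ∈ (Finset.univ.image c.pos)ᶜ := by
    simp only [Finset.mem_compl, Finset.mem_image]
    push_neg
    exact fun j _ => ha j
  have hb' : b ∈ (Finset.univ.image c.pos)ᶜ := by
    simp only [Finset.mem_compl, Finset.mem_image]
    push_neg
    exact fun j _ => hb j
  rw [hx, Finset.mem_singleton] at ha' hb'
  rw [ha', hb']

/-- From reflexive-transitive reachability we can extract a duplicate-free chain. -/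
lemma exists_nodup_chain {α : Type*} [DecidableEq α] {r : α → α → Prop} {a b : α}
    (h : Relation.ReflTransGen r a b) :
    ∃ L : List α, L.Chain' r ∧ L.head? = some a ∧ L.getLast? = some b ∧ L.Nodup := by
  induction h using Relation.ReflTransGen.head_induction_on with
  | refl => exact ⟨[b], List.isChain_singleton b, rfl, rfl, List.nodup_singleton b⟩
  | head hxy hyb ih =>
    rename_i x y
    obtain ⟨L, hc, hh, hl, hn⟩ := ih
    by_cases hm : x ∈ L
    · obtain ⟨p, s, rfl⟩ := List.append_of_mem hm
      refine ⟨x :: s, hc.suffix ⟨p, rfl⟩, rfl, ?_, hn.sublist (List.suffix_append p (x :: s)).sublist⟩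
      rw [List.getLast?_append] at hl
      rcases h' : (x :: s).getLast? with _ | z
      · simp at h'
      · rw [h'] at hl
        simpa using hl
    · have hLne : L ≠ [] := by
        rintro rfl; simp at hh
      refine ⟨x :: L, List.isChain_cons.mpr ⟨?_, hc⟩, rfl, ?_, List.nodup_cons.mpr ⟨hm, hn⟩⟩
      · intro z hz
        rw [hh, Option.mem_some_iff] at hz
        exact hz ▸ hxy
      · cases L with
        | nil => exact absurd rfl hLne
        | cons z t => rw [List.getLast?_cons_cons]; exact hl

/-- Moving the hole along a duplicate-free static chain whose later cells are untouched. -/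
lemma move_along {m n k : ℕ} (c : RHConfig m n k) :
    ∀ (L : List (Cell m n)) (u : Cell m n) (c' : RHConfig m n k),
      Relation.ReflTransGen RHMove c c' → c'.ori = c.ori →
      (∀ j, c'.pos j ≠ u) →
      (∀ j, c.pos j ∈ L → c'.pos j = c.pos j) →
      (u :: L).Chain' (staticEdge c) → (u :: L).Nodup →
      ∃ c'' : RHConfig m n k, Relation.ReflTransGen RHMove c c'' ∧
        ∀ j, some (c''.pos j) ≠ (u :: L).getLast? := by
  intro L
  induction L with
  | nil =>
    intro u c' hmov _ hhole _ _ _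
    exact ⟨c', hmov, fun j => by simpa using hhole j⟩
  | cons v L' ih =>
    intro u c' hmov hori hhole huntouched hchain hnodup
    classical
    have huv : staticEdge c u v := (List.isChain_cons_cons.mp hchain).1
    have hchain' : (v :: L').Chain' (staticEdge c) := (List.isChain_cons_cons.mp hchain).2
    have hunv : u ∉ v :: L' := (List.nodup_cons.mp hnodup).1
    have hnodup' : (v :: L').Nodup := (List.nodup_cons.mp hnodup).2
    obtain ⟨j0, hj0v, horj0⟩ := huv
    have hpj0 : c'.pos j0 = v := by
      rw [huntouched j0 (by rw [hj0v]; exact (List.mem_cons_self (a := v) (l := L'))), hj0v]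
    -- the new configuration: car j0 moves from v into the hole u
    have hinj : Function.Injective (Function.update c'.pos j0 u) := by
      intro a b hab
      by_cases ha : a = j0 <;> by_cases hb : b = j0
      · rw [ha, hb]
      · rw [ha, Function.update_self, Function.update_of_ne hb] at hab
        exact absurd hab.symm (hhole b)
      · rw [hb, Function.update_self, Function.update_of_ne ha] at hab
        exact absurd hab (hhole a)
      · rw [Function.update_of_ne ha, Function.update_of_ne hb] at hab
        exact c'.inj hab
    set c2 : RHConfig m n k := ⟨c'.ori, Function.update c'.pos j0 u, hinj⟩ with hc2
    have hc2j0 : c2.pos j0 = u := Function.update_self j0 u c'.pos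
    have hc2ne : ∀ j, j ≠ j0 → c2.pos j = c'.pos j := fun j hj =>
      Function.update_of_ne hj u c'.pos
    have hmove : RHMove c' c2 := by
      refine ⟨rfl, j0, hc2ne, fun j => by rw [hc2j0]; exact hhole j, ?_⟩
      rw [hpj0, hc2j0, hori]
      rcases horj0 with ⟨hb, hadj⟩ | ⟨hb, hadj⟩
      · exact Or.inl ⟨hb, hAdj_symm hadj⟩
      · exact Or.inr ⟨hb, vAdj_symm hadj⟩
    have hhole2 : ∀ j, c2.pos j ≠ v := by
      intro j hjv
      by_cases hj : j = j0
      · rw [hj, hc2j0] at hjv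
        exact hunv (hjv ▸ (List.mem_cons_self (a := v) (l := L')))
      · rw [hc2ne j hj] at hjv
        exact hj (c'.inj (hjv.trans hpj0.symm))
    have huntouched2 : ∀ j, c.pos j ∈ L' → c2.pos j = c.pos j := by
      intro j hjL
      have hjne : j ≠ j0 := by
        rintro rfl
        rw [hj0v] at hjL
        exact (List.nodup_cons.mp hnodup').1 hjL
      rw [hc2ne j hjne]
      exact huntouched j (List.mem_cons_of_mem v hjL)
    have hres := ih v c2 (hmov.tail hmove) hori hhole2 huntouched2 hchain' hnodup'
    obtain ⟨c'', hmov'', hlast⟩ := hres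
    exact ⟨c'', hmov'', by rwa [List.getLast?_cons_cons]⟩

/-- Invariant maintained along any move sequence: the hole stays in the
statically reachable region, cars starting inside stay inside, and cars
starting outside never move. -/
lemma rh_invariant {m n k : ℕ} (c : RHConfig m n k) (hk : k + 1 = m * n)
    (e : Cell m n) (he : ∀ j, c.pos j ≠ e)
    {c' : RHConfig m n k} (h : Relation.ReflTransGen RHMove c c') :
    c'.ori = c.ori ∧
    (∃ f, Relation.ReflTransGen (staticEdge c) e f ∧ ∀ j, c'.pos j ≠ f) ∧
    (∀ j, Relation.ReflTransGen (staticEdge c) e (c.pos j) →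
      Relation.ReflTransGen (staticEdge c) e (c'.pos j)) ∧
    (∀ j, ¬ Relation.ReflTransGen (staticEdge c) e (c.pos j) → c'.pos j = c.pos j) := by
  induction h with
  | refl => exact ⟨rfl, ⟨e, Relation.ReflTransGen.refl, he⟩, fun j h => h, fun j _ => rfl⟩
  | @tail b c'' h1 h2 ih =>
    obtain ⟨hori, ⟨f, hf, hfe⟩, hB, hC⟩ := ih
    obtain ⟨hori2, i0, hfix, htarget, hadj⟩ := h2
    have hteq : c''.pos i0 = f := unique_empty b hk _ _ htarget hfe
    have hRpos : Relation.ReflTransGen (staticEdge c) e (c.pos i0) := by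
      by_contra hnR
      have hbp : b.pos i0 = c.pos i0 := hC i0 hnR
      have hedge : staticEdge c f (c.pos i0) := by
        refine ⟨i0, rfl, ?_⟩
        rw [← hori, ← hbp]
        rcases hadj with ⟨hb', hadj'⟩ | ⟨hb', hadj'⟩
        · exact Or.inl ⟨hb', by rw [← hteq]; exact hAdj_symm hadj'⟩
        · exact Or.inr ⟨hb', by rw [← hteq]; exact vAdj_symm hadj'⟩
      exact hnR (hf.tail hedge)
    have hRw : Relation.ReflTransGen (staticEdge c) e (b.pos i0) := hB i0 hRpos
    refine ⟨hori2.trans hori, ⟨b.pos i0, hRw, ?_⟩, ?_, ?_⟩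
    · intro j hj
      by_cases hjj : j = i0
      · rw [hjj, hteq] at hj
        exact hfe i0 hj.symm
      · rw [hfix j hjj] at hj
        exact hjj (b.inj hj)
    · intro j hRj
      by_cases hjj : j = i0
      · rw [hjj, hteq]; exact hf
      · rw [hfix j hjj]; exact hB j hRj
    · intro j hnRj
      have hjj : j ≠ i0 := by rintro rfl; exact hnRj hRpos
      rw [hfix j hjj]
      exact hC j hnRj

/-- in a Unit Rush Hour configuration with exactly one empty cell
`e`, a designated car `i` (initially occupying cell `c.pos i`) is moved during
some finite sequence of legal moves if and only if the static digraph contains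
a directed path of length at least 1 from the empty cell to the car's cell. -/
theorem stmt_5 {m n k : ℕ} (c : RHConfig m n k) (hk : k + 1 = m * n)
    (e : Cell m n) (he : ∀ j, c.pos j ≠ e) (i : Fin k) :
    (∃ c' : RHConfig m n k,
        Relation.ReflTransGen RHMove c c' ∧ c'.pos i ≠ c.pos i) ↔
    Relation.TransGen (staticEdge c) e (c.pos i) := by
  constructor
  · rintro ⟨c', hmov, hne⟩
    obtain ⟨_, _, _, hC⟩ := rh_invariant c hk e he hmov
    have hR : Relation.ReflTransGen (staticEdge c) e (c.pos i) := by
      by_contra hnR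
      exact hne (hC i hnR)
    rcases hR.cases_head with heq | ⟨u, hu, hub⟩
    · exact absurd heq.symm (he i)
    · exact Relation.TransGen.head' hu hub
  · intro h
    classical
    obtain ⟨L, hchain, hhead, hlast, hnodup⟩ := exists_nodup_chain h.to_reflTransGen
    cases L with
    | nil => simp at hhead
    | cons u rest =>
      have hue : u = e := by simpa using hhead
      subst hue
      obtain ⟨c'', hmov, hlast'⟩ :=
        move_along c rest u c Relation.ReflTransGen.refl rfl he (fun j _ => rfl) hchain hnodup
      refine ⟨c'', hmov, ?_⟩
      have := hlast' i
      rw [hlast] at this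
      simpa using this
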